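/- Let S = ⟨a_0,…,a_g⟩ be a numerical semigroup that is free for the arrangement (a_0,…,a_g), and let P_S(t) = Σ_{s∈S} t^s be its Poincaré series, a formal power series in ℤ⟦t⟧. Then P_S(t)·∏_{i=0}^{g} (1 − t^{a_i}) = ∏_{i=1}^{g} (1 − t^{n_i·a_i}) as formal power series; equivalently P_S(t) = ∏_{i=1}^{g} (1 − t^{n_i·a_i}) / ∏_{i=0}^{g} (1 − t^{a_i}). -/

import Mathlib

/-- `eSeq a i = gcd(a 0, …, a i)`. -/
def eSeq (a : ℕ → ℕ) : ℕ → ℕ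
  | 0 => a 0
  | i + 1 => Nat.gcd (eSeq a i) (a (i + 1))

/-- `nSeq a i = e_{i-1} / e_i` (intended for `1 ≤ i`). -/
def nSeq (a : ℕ → ℕ) (i : ℕ) : ℕ := eSeq a (i - 1) / eSeq a i

/-- `gen a i = ⟨a 0, …, a i⟩`, the set of all ℕ-linear combinations. -/
def gen (a : ℕ → ℕ) (i : ℕ) : Set ℕ :=
  {s | ∃ c : ℕ → ℕ, s = ∑ j ∈ Finset.range (i + 1), c j * a j}

/-- The semigroup `S = ⟨a 0, …, a g⟩` is free for the arrangement `(a 0, …, a g)`. -/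
def IsFreeArr (a : ℕ → ℕ) (g : ℕ) : Prop :=
  eSeq a g = 1 ∧ ∀ i, 1 ≤ i → i ≤ g → nSeq a i * a i ∈ gen a (i - 1)

/-- The Poincaré series `P_S(t) = ∑_{s ∈ S} t^s` of a set `S ⊆ ℕ`,
as a formal power series over ℤ. -/
noncomputable def poincareSeries (S : Set ℕ) : PowerSeries ℤ :=
  PowerSeries.mk fun s => by classical exact if s ∈ S then 1 else 0


open PowerSeries Finset

open scoped Classical in
lemma coeff_poincare (S : Set ℕ) (m : ℕ) :
    PowerSeries.coeff m (poincareSeries S) = if m ∈ S then 1 else 0 := by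
  rw [poincareSeries, coeff_mk]

lemma gen_zero_iff (a : ℕ → ℕ) (s : ℕ) : s ∈ gen a 0 ↔ ∃ c, s = c * a 0 := by
  constructor
  · rintro ⟨c, rfl⟩; exact ⟨c 0, by simp⟩
  · rintro ⟨c, rfl⟩; exact ⟨fun _ => c, by simp⟩

lemma gen_add {a : ℕ → ℕ} {i s t : ℕ} (hs : s ∈ gen a i) (ht : t ∈ gen a i) :
    s + t ∈ gen a i := by
  obtain ⟨c, rfl⟩ := hs; obtain ⟨d, rfl⟩ := ht
  refine ⟨fun j => c j + d j, ?_⟩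
  rw [← Finset.sum_add_distrib]
  exact Finset.sum_congr rfl fun j _ => by ring

lemma gen_smul {a : ℕ → ℕ} {i s : ℕ} (k : ℕ) (hs : s ∈ gen a i) : k * s ∈ gen a i := by
  obtain ⟨c, rfl⟩ := hs
  refine ⟨fun j => k * c j, ?_⟩
  rw [Finset.mul_sum]
  exact Finset.sum_congr rfl fun j _ => by ring

lemma gen_mono {a : ℕ → ℕ} {i s : ℕ} (hs : s ∈ gen a i) : s ∈ gen a (i + 1) := by
  classical
  obtain ⟨c, rfl⟩ := hs
  refine ⟨Function.update c (i + 1) 0, Eq.symm ?_⟩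
  rw [Finset.sum_range_succ, Function.update_self, zero_mul, add_zero]
  refine Finset.sum_congr rfl fun j hj => ?_
  rw [Finset.mem_range] at hj
  rw [Function.update_of_ne (by omega)]

lemma single_mem_gen (a : ℕ → ℕ) (i c : ℕ) : c * a i ∈ gen a i := by
  classical
  refine ⟨fun j => if j = i then c else 0, Eq.symm ?_⟩
  rw [Finset.sum_range_succ]
  beta_reduce
  rw [if_pos rfl, Finset.sum_eq_zero, zero_add]
  intro j hj
  rw [Finset.mem_range] at hj
  rw [if_neg (show j ≠ i by omega), zero_mul]

lemma eSeq_dvd (a : ℕ → ℕ) : ∀ i j, j ≤ i → eSeq a i ∣ a j := by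
  intro i
  induction i with
  | zero => intro j hj; interval_cases j; exact dvd_refl _
  | succ i ih =>
    intro j hj
    rcases Nat.lt_or_ge j (i + 1) with h | h
    · exact dvd_trans (Nat.gcd_dvd_left _ _) (ih j (by omega))
    · have : j = i + 1 := by omega
      subst this; exact Nat.gcd_dvd_right _ _

lemma eSeq_dvd_mem {a : ℕ → ℕ} {i s : ℕ} (hs : s ∈ gen a i) : eSeq a i ∣ s := by
  obtain ⟨c, rfl⟩ := hs
  refine Finset.dvd_sum fun j hj => Dvd.dvd.mul_left ?_ _
  rw [Finset.mem_range] at hj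
  exact eSeq_dvd a i j (by omega)

lemma eSeq_pos (a : ℕ → ℕ) (h0 : 0 < a 0) : ∀ i, 0 < eSeq a i := by
  intro i
  induction i with
  | zero => exact h0
  | succ i ih => exact Nat.gcd_pos_of_pos_left _ ih

lemma nSeq_eq (a : ℕ → ℕ) (i : ℕ) : nSeq a (i + 1) = eSeq a i / eSeq a (i + 1) := by
  unfold nSeq; simp

lemma nSeq_pos (a : ℕ → ℕ) (h0 : 0 < a 0) (i : ℕ) : 0 < nSeq a (i + 1) := by
  have he : eSeq a (i + 1) ∣ eSeq a i := Nat.gcd_dvd_left _ _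
  rw [nSeq_eq]
  exact Nat.div_pos (Nat.le_of_dvd (eSeq_pos a h0 i) he) (eSeq_pos a h0 (i + 1))

lemma nSeq_mul (a : ℕ → ℕ) (i : ℕ) :
    nSeq a (i + 1) * eSeq a (i + 1) = eSeq a i := by
  rw [nSeq_eq]
  exact Nat.div_mul_cancel (Nat.gcd_dvd_left _ _)

lemma gen_succ_eq (a : ℕ → ℕ) (i : ℕ) (h0 : 0 < a 0)
    (hmem : nSeq a (i + 1) * a (i + 1) ∈ gen a i) :
    gen a (i + 1) =
      {s | ∃ p ∈ gen a i, ∃ c < nSeq a (i + 1), s = p + c * a (i + 1)} := by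
  have hn : 0 < nSeq a (i + 1) := nSeq_pos a h0 i
  ext s
  constructor
  · rintro ⟨c, rfl⟩
    rw [Finset.sum_range_succ]
    set n := nSeq a (i + 1)
    set A := a (i + 1)
    obtain ⟨q, r, hr, hc⟩ : ∃ q r, r < n ∧ c (i + 1) = n * q + r :=
      ⟨_, _, Nat.mod_lt _ hn, (Nat.div_add_mod _ _).symm⟩
    refine ⟨(∑ j ∈ Finset.range (i + 1), c j * a j) + q * (n * A),
      gen_add ⟨c, rfl⟩ (gen_smul _ hmem), r, hr, ?_⟩
    rw [hc]; ring
  · rintro ⟨p, hp, c, _, rfl⟩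
    exact gen_add (gen_mono hp) (single_mem_gen a (i + 1) c)

lemma gen_succ_unique_aux (a : ℕ → ℕ) (i : ℕ) (h0 : 0 < a 0)
    {p p' c c' : ℕ} (hp : p ∈ gen a i) (hp' : p' ∈ gen a i)
    (hle : c ≤ c') (h : p + c * a (i + 1) = p' + c' * a (i + 1)) :
    nSeq a (i + 1) ∣ c' - c := by
  set d := eSeq a i with hd_def
  set e := eSeq a (i + 1) with he_def
  set n := nSeq a (i + 1) with hn_def
  have hde : n * e = d := nSeq_mul a i
  have hepos : 0 < e := eSeq_pos a h0 (i + 1)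
  obtain ⟨b, hb⟩ : e ∣ a (i + 1) := Nat.gcd_dvd_right _ _
  have hdp : d ∣ p := eSeq_dvd_mem hp
  have hdp' : d ∣ p' := eSeq_dvd_mem hp'
  have hpe : p = p' + (c' - c) * a (i + 1) := by
    have : c' * a (i + 1) = (c' - c) * a (i + 1) + c * a (i + 1) := by
      rw [← Nat.add_mul]; congr 1; omega
    omega
  have hdvd : d ∣ (c' - c) * a (i + 1) := by
    have h2 := Nat.dvd_sub (hpe ▸ hdp) hdp'
    simpa using h2
  obtain ⟨k, hk⟩ := hdvd
  have hkey : (c' - c) * b = n * k := by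
    have h1 : e * ((c' - c) * b) = e * (n * k) := by
      calc e * ((c' - c) * b) = (c' - c) * (e * b) := by ring
        _ = (c' - c) * a (i + 1) := by rw [← hb]
        _ = d * k := hk
        _ = e * (n * k) := by rw [← hde]; ring
    exact Nat.eq_of_mul_eq_mul_left hepos h1
  have hcop : Nat.Coprime n b := by
    have hgcd : Nat.gcd d (a (i + 1)) = e := rfl
    have hcd := Nat.coprime_div_gcd_div_gcd (m := d) (n := a (i + 1))
      (by rw [hgcd]; exact hepos)
    rw [hgcd] at hcd
    have h1 : d / e = n := by
      rw [hn_def, nSeq_eq]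
    have h2 : a (i + 1) / e = b := by
      rw [hb]; exact Nat.mul_div_cancel_left b hepos
    rwa [h1, h2] at hcd
  exact hcop.dvd_of_dvd_mul_right ⟨k, hkey⟩

open scoped Classical in
lemma poincare_mul (A B : Set ℕ)
    (hU : ∀ p q p' q', p ∈ A → q ∈ B → p' ∈ A → q' ∈ B → p + q = p' + q' → p = p' ∧ q = q') :
    poincareSeries A * poincareSeries B =
      poincareSeries {m | ∃ p ∈ A, ∃ q ∈ B, m = p + q} := by
  ext m
  rw [PowerSeries.coeff_mul, coeff_poincare]
  simp only [coeff_poincare]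
  by_cases hm : m ∈ {m | ∃ p ∈ A, ∃ q ∈ B, m = p + q}
  · obtain ⟨p, hp, q, hq, rfl⟩ := hm
    rw [if_pos (show p + q ∈ {m | ∃ p ∈ A, ∃ q ∈ B, m = p + q} from ⟨p, hp, q, hq, rfl⟩)]
    rw [Finset.sum_eq_single (p, q)]
    · rw [if_pos hp, if_pos hq, mul_one]
    · rintro ⟨p', q'⟩ hmem hne
      rw [Finset.HasAntidiagonal.mem_antidiagonal] at hmem
      by_cases hp' : p' ∈ A
      · by_cases hq' : q' ∈ B
        · exfalso
          obtain ⟨h1, h2⟩ := hU p' q' p q hp' hq' hp hq hmem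
          exact hne (by rw [h1, h2])
        · rw [if_neg hq', mul_zero]
      · rw [if_neg hp', zero_mul]
    · intro hnot
      exact absurd (Finset.HasAntidiagonal.mem_antidiagonal.mpr (rfl : (p, q).1 + (p, q).2 = p + q)) hnot
  · rw [if_neg hm]
    refine Finset.sum_eq_zero fun x hx => ?_
    rw [Finset.HasAntidiagonal.mem_antidiagonal] at hx
    by_cases hp : x.1 ∈ A
    · by_cases hq : x.2 ∈ B
      · exact absurd ⟨x.1, hp, x.2, hq, hx.symm⟩ hm
      · rw [if_neg hq, mul_zero]
    · rw [if_neg hp, zero_mul]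

open scoped Classical in
lemma poincare_block (A n : ℕ) (hA : 0 < A) :
    poincareSeries {q | ∃ c < n, q = c * A} =
      ∑ c ∈ Finset.range n, (PowerSeries.X : PowerSeries ℤ) ^ (c * A) := by
  ext m
  rw [coeff_poincare, map_sum]
  simp only [PowerSeries.coeff_X_pow]
  by_cases hm : ∃ c < n, m = c * A
  · obtain ⟨c, hc, rfl⟩ := hm
    rw [if_pos (show (c * A : ℕ) ∈ {q | ∃ c < n, q = c * A} from ⟨c, hc, rfl⟩)]
    rw [Finset.sum_eq_single c]
    · rw [if_pos rfl]
    · intro c' hc' hne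
      rw [if_neg fun heq => hne (Nat.eq_of_mul_eq_mul_right hA heq).symm]
    · intro h; exact absurd (Finset.mem_range.mpr hc) h
  · rw [if_neg (show m ∉ {q | ∃ c < n, q = c * A} from hm)]
    symm
    refine Finset.sum_eq_zero fun c hc => ?_
    rw [Finset.mem_range] at hc
    rw [if_neg fun heq => hm ⟨c, hc, heq⟩]

open scoped Classical in
lemma poincare_base (a : ℕ → ℕ) (h0 : 0 < a 0) :
    poincareSeries (gen a 0) * (1 - (PowerSeries.X : PowerSeries ℤ) ^ (a 0)) = 1 := by
  ext m
  rw [mul_sub, mul_one, map_sub, PowerSeries.coeff_mul_X_pow', coeff_poincare,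
    PowerSeries.coeff_one]
  by_cases hm : m = 0
  · subst hm
    rw [if_pos ((gen_zero_iff a 0).mpr ⟨0, by simp⟩), if_neg (by omega), if_pos rfl]
    ring
  · rw [if_neg hm]
    by_cases hle : a 0 ≤ m
    · rw [if_pos hle, coeff_poincare]
      have hiff : m ∈ gen a 0 ↔ m - a 0 ∈ gen a 0 := by
        rw [gen_zero_iff, gen_zero_iff]
        constructor
        · rintro ⟨c, rfl⟩
          refine ⟨c - 1, ?_⟩
          have hc : 1 ≤ c := by
            rcases Nat.eq_zero_or_pos c with h | h
            · subst h; simp at hle; omega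
            · exact h
          rw [Nat.sub_mul, one_mul]
        · rintro ⟨c, hc⟩
          exact ⟨c + 1, by rw [Nat.add_mul, one_mul]; omega⟩
      by_cases h1 : m ∈ gen a 0
      · rw [if_pos h1, if_pos (hiff.mp h1)]; ring
      · rw [if_neg h1, if_neg fun h => h1 (hiff.mpr h)]; ring
    · rw [if_neg hle, sub_zero, if_neg]
      intro hmem
      rw [gen_zero_iff] at hmem
      obtain ⟨c, hc⟩ := hmem
      rcases c with _ | k
      · simp at hc; omega
      · rw [Nat.succ_mul] at hc; omega

lemma poincare_main (a : ℕ → ℕ) (g : ℕ) (hpos : ∀ i, i ≤ g → 0 < a i)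
    (hfree : ∀ i, 1 ≤ i → i ≤ g → nSeq a i * a i ∈ gen a (i - 1)) :
    poincareSeries (gen a g) * (1 - (PowerSeries.X : PowerSeries ℤ) ^ (a 0)) =
      ∏ i ∈ Finset.Icc 1 g,
        ∑ c ∈ Finset.range (nSeq a i), (PowerSeries.X : PowerSeries ℤ) ^ (c * a i) := by
  induction g with
  | zero => simpa using poincare_base a (hpos 0 le_rfl)
  | succ g ih =>
    have h0 : 0 < a 0 := hpos 0 (by omega)
    have hmem : nSeq a (g + 1) * a (g + 1) ∈ gen a g := by
      have h := hfree (g + 1) (by omega) le_rfl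
      simpa using h
    have hU : ∀ p q p' q', p ∈ gen a g → q ∈ {q | ∃ c < nSeq a (g + 1), q = c * a (g + 1)} →
        p' ∈ gen a g → q' ∈ {q | ∃ c < nSeq a (g + 1), q = c * a (g + 1)} →
        p + q = p' + q' → p = p' ∧ q = q' := by
      rintro p q p' q' hp ⟨c, hc, rfl⟩ hp' ⟨c', hc', rfl⟩ heq
      have hcc : c = c' := by
        rcases le_total c c' with hle | hle
        · have hd := gen_succ_unique_aux a g h0 hp hp' hle heq
          rcases Nat.eq_zero_or_pos (c' - c) with h | h
          · omega
          · have := Nat.le_of_dvd h hd; omega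
        · have hd := gen_succ_unique_aux a g h0 hp' hp hle heq.symm
          rcases Nat.eq_zero_or_pos (c - c') with h | h
          · omega
          · have := Nat.le_of_dvd h hd; omega
      subst hcc
      exact ⟨by omega, rfl⟩
    have hset : gen a (g + 1) =
        {m | ∃ p ∈ gen a g, ∃ q ∈ {q | ∃ c < nSeq a (g + 1), q = c * a (g + 1)}, m = p + q} := by
      rw [gen_succ_eq a g h0 hmem]
      ext s
      simp only [Set.mem_setOf_eq]
      constructor
      · rintro ⟨p, hp, c, hc, rfl⟩
        exact ⟨p, hp, c * a (g + 1), ⟨c, hc, rfl⟩, rfl⟩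
      · rintro ⟨p, hp, q, ⟨c, hc, rfl⟩, rfl⟩
        exact ⟨p, hp, c, hc, rfl⟩
    have hstep : poincareSeries (gen a (g + 1)) =
        poincareSeries (gen a g) *
          (∑ c ∈ Finset.range (nSeq a (g + 1)),
            (PowerSeries.X : PowerSeries ℤ) ^ (c * a (g + 1))) := by
      rw [hset, ← poincare_mul _ _ hU,
        poincare_block (a (g + 1)) (nSeq a (g + 1)) (hpos (g + 1) le_rfl)]
    rw [hstep, Finset.prod_Icc_succ_top (by omega : 1 ≤ g + 1),
      mul_right_comm,
      ih (fun i hi => hpos i (by omega)) (fun i h1 h2 => hfree i h1 (by omega))]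

open scoped Classical in
theorem stmt_4 (g : ℕ) (a : ℕ → ℕ) (hpos : ∀ i, i ≤ g → 0 < a i)
    (hfree : IsFreeArr a g) :
    poincareSeries (gen a g) *
        ∏ i ∈ Finset.range (g + 1), (1 - (PowerSeries.X : PowerSeries ℤ) ^ (a i)) =
      ∏ i ∈ Finset.Icc 1 g, (1 - (PowerSeries.X : PowerSeries ℤ) ^ (nSeq a i * a i)) := by
  obtain ⟨-, hfree2⟩ := hfree
  have hmain := poincare_main a g hpos hfree2
  have hrange : Finset.range (g + 1) = insert 0 (Finset.Icc 1 g) := by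
    ext j
    simp only [Finset.mem_range, Finset.mem_insert, Finset.mem_Icc]
    omega
  rw [hrange, Finset.prod_insert (by simp), ← mul_assoc, hmain,
    ← Finset.prod_mul_distrib]
  refine Finset.prod_congr rfl fun i hi => ?_
  have h1 : ∀ c, (PowerSeries.X : PowerSeries ℤ) ^ (c * a i) =
      ((PowerSeries.X : PowerSeries ℤ) ^ (a i)) ^ c := fun c => by
    rw [← pow_mul, mul_comm]
  simp_rw [h1]
  have hgeom := geom_sum_mul ((PowerSeries.X : PowerSeries ℤ) ^ (a i)) (nSeq a i)
  have h2 : (∑ c ∈ Finset.range (nSeq a i),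
        ((PowerSeries.X : PowerSeries ℤ) ^ (a i)) ^ c) *
      (1 - (PowerSeries.X : PowerSeries ℤ) ^ (a i)) =
      1 - ((PowerSeries.X : PowerSeries ℤ) ^ (a i)) ^ (nSeq a i) := by
    linear_combination (-1 : PowerSeries ℤ) * hgeom
  rw [h2, ← pow_mul, mul_comm (a i)]
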